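/- For the conditional risk of the asymmetric softmax loss with η ∈ Δ^K (all coordinates positive) and c ∈ (0,1), the excess conditional risk at any u satisfies R(u,η,c) − inf_v R(v,η,c) = KL(η ‖ ψ̃_{1:K}(u)) + kl(c ‖ ψ̃_{K+1}(u)), where kl(a‖b) = a log(a/b) + (1−a) log((1−a)/(1−b)). -/

import Mathlib

open Finset Real

/-- The asymmetric softmax function of Definition 2. -/
noncomputable def asoftmax (K : ℕ) (u : Fin (K + 1) → ℝ) (y : Fin (K + 1)) : ℝ :=
  if y = Fin.last K then
    Real.exp (u y) /
      ((∑ y' : Fin (K + 1), Real.exp (u y')) - ⨆ y' : Fin K, Real.exp (u y'.castSucc))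
  else Real.exp (u y) / ∑ y' : Fin K, Real.exp (u y'.castSucc)

/-- The conditional risk of the asymmetric softmax loss. -/
noncomputable def condRisk (K : ℕ) (η : Fin K → ℝ) (c : ℝ)
    (u : Fin (K + 1) → ℝ) : ℝ :=
  -(∑ y : Fin K, η y * Real.log (asoftmax K u y.castSucc))
    - (1 - c) * Real.log (1 - asoftmax K u (Fin.last K))
    - c * Real.log (asoftmax K u (Fin.last K))

section Aux

/-- Sum minus sup is positive for a positive vector on `Fin K`, `K ≥ 2`. -/
lemma gap_pos {K : ℕ} (hK : 1 < K) (w : Fin K → ℝ) (hw : ∀ i, 0 < w i) :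
    (⨆ i, w i) < ∑ i, w i := by
  have hne : Nonempty (Fin K) := ⟨⟨0, by omega⟩⟩
  rw [← Finset.sup'_univ_eq_ciSup]
  obtain ⟨i₀, -, h0⟩ := Finset.exists_mem_eq_sup' (Finset.univ_nonempty) w
  rw [h0]
  have hmem : i₀ ∈ (Finset.univ : Finset (Fin K)) := Finset.mem_univ _
  rw [← Finset.add_sum_erase _ w hmem]
  have hne' : ((Finset.univ : Finset (Fin K)).erase i₀).Nonempty := by
    rw [← Finset.card_pos, Finset.card_erase_of_mem hmem, Finset.card_univ, Fintype.card_fin]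
    omega
  have : 0 < ∑ i ∈ (Finset.univ : Finset (Fin K)).erase i₀, w i :=
    Finset.sum_pos (fun i _ => hw i) hne'
  linarith

variable {K : ℕ} (hK : 1 < K)

lemma fin_nonempty (hK : 1 < K) : Nonempty (Fin K) := ⟨⟨0, by omega⟩⟩

/-- Facts about asoftmax at a general point. -/
lemma asoftmax_castSucc (u : Fin (K + 1) → ℝ) (y : Fin K) :
    asoftmax K u y.castSucc
      = Real.exp (u y.castSucc) / ∑ y' : Fin K, Real.exp (u y'.castSucc) := by
  rw [asoftmax, if_neg (Fin.castSucc_lt_last y).ne]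

lemma asoftmax_last (u : Fin (K + 1) → ℝ) :
    asoftmax K u (Fin.last K)
      = Real.exp (u (Fin.last K)) /
        ((∑ y' : Fin K, Real.exp (u y'.castSucc))
          - (⨆ y' : Fin K, Real.exp (u y'.castSucc)) + Real.exp (u (Fin.last K))) := by
  rw [asoftmax, if_pos rfl, Fin.sum_univ_castSucc]
  ring_nf

lemma T_pos (hK : 1 < K) (u : Fin (K + 1) → ℝ) :
    0 < ∑ y' : Fin K, Real.exp (u y'.castSucc) := by
  have : Nonempty (Fin K) := fin_nonempty hK
  exact Finset.sum_pos (fun i _ => Real.exp_pos _) Finset.univ_nonempty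

lemma TM_pos (hK : 1 < K) (u : Fin (K + 1) → ℝ) :
    0 < (∑ y' : Fin K, Real.exp (u y'.castSucc))
        - (⨆ y' : Fin K, Real.exp (u y'.castSucc)) := by
  have := gap_pos hK (fun y => Real.exp (u y.castSucc)) (fun _ => Real.exp_pos _)
  linarith

lemma q_pos (hK : 1 < K) (u : Fin (K + 1) → ℝ) : 0 < asoftmax K u (Fin.last K) := by
  rw [asoftmax_last]
  have h1 := TM_pos hK u
  have h2 := Real.exp_pos (u (Fin.last K))
  positivity

lemma one_sub_q (hK : 1 < K) (u : Fin (K + 1) → ℝ) :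
    1 - asoftmax K u (Fin.last K)
      = ((∑ y' : Fin K, Real.exp (u y'.castSucc))
          - (⨆ y' : Fin K, Real.exp (u y'.castSucc))) /
        ((∑ y' : Fin K, Real.exp (u y'.castSucc))
          - (⨆ y' : Fin K, Real.exp (u y'.castSucc)) + Real.exp (u (Fin.last K))) := by
  rw [asoftmax_last]
  have h1 := TM_pos hK u
  have h2 := Real.exp_pos (u (Fin.last K))
  field_simp
  ring

lemma q_lt_one (hK : 1 < K) (u : Fin (K + 1) → ℝ) : asoftmax K u (Fin.last K) < 1 := by
  have h1 := TM_pos hK u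
  have h2 := Real.exp_pos (u (Fin.last K))
  have := one_sub_q hK u
  nlinarith [div_pos h1 (by linarith : (0:ℝ) <
    (∑ y' : Fin K, Real.exp (u y'.castSucc))
      - (⨆ y' : Fin K, Real.exp (u y'.castSucc)) + Real.exp (u (Fin.last K)))]

lemma p_pos (hK : 1 < K) (u : Fin (K + 1) → ℝ) (y : Fin K) :
    0 < asoftmax K u y.castSucc := by
  rw [asoftmax_castSucc]
  exact div_pos (Real.exp_pos _) (T_pos hK u)

lemma p_sum (hK : 1 < K) (u : Fin (K + 1) → ℝ) :
    ∑ y : Fin K, asoftmax K u y.castSucc = 1 := by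
  have hT := T_pos hK u
  simp only [asoftmax_castSucc]
  rw [← Finset.sum_div, div_self hT.ne']

/-- The entropy lower-bound value. -/
noncomputable def Hval (K : ℕ) (η : Fin K → ℝ) (c : ℝ) : ℝ :=
  -(∑ y : Fin K, η y * Real.log (η y)) - (1 - c) * Real.log (1 - c) - c * Real.log c

/-- The KL-divergence expression. -/
noncomputable def Dval (K : ℕ) (η : Fin K → ℝ) (c : ℝ) (u : Fin (K + 1) → ℝ) : ℝ :=
  (∑ y : Fin K, η y * Real.log (η y / asoftmax K u y.castSucc)) +
    (c * Real.log (c / asoftmax K u (Fin.last K)) +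
      (1 - c) * Real.log ((1 - c) / (1 - asoftmax K u (Fin.last K))))

lemma condRisk_decomp (hK : 1 < K) (η : Fin K → ℝ) (hpos : ∀ y, 0 < η y)
    (c : ℝ) (hc0 : 0 < c) (hc1 : c < 1) (u : Fin (K + 1) → ℝ) :
    condRisk K η c u = Hval K η c + Dval K η c u := by
  have hq0 := q_pos hK u
  have hq1 := q_lt_one hK u
  have hp := p_pos hK u
  rw [condRisk, Hval, Dval]
  rw [Real.log_div hc0.ne' hq0.ne', Real.log_div (by linarith : (1:ℝ) - c ≠ 0)
    (by linarith : 1 - asoftmax K u (Fin.last K) ≠ 0)]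
  have hsum : ∑ y : Fin K, η y * Real.log (η y / asoftmax K u y.castSucc)
      = (∑ y : Fin K, η y * Real.log (η y))
        - ∑ y : Fin K, η y * Real.log (asoftmax K u y.castSucc) := by
    rw [← Finset.sum_sub_distrib]
    refine Finset.sum_congr rfl fun y _ => ?_
    rw [Real.log_div (hpos y).ne' (hp y).ne']
    ring
  rw [hsum]
  ring

lemma Dval_nonneg (hK : 1 < K) (η : Fin K → ℝ) (hpos : ∀ y, 0 < η y)
    (hsum : ∑ y, η y = 1) (c : ℝ) (hc0 : 0 < c) (hc1 : c < 1) (u : Fin (K + 1) → ℝ) :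
    0 ≤ Dval K η c u := by
  have hq0 := q_pos hK u
  have hq1 := q_lt_one hK u
  have hp := p_pos hK u
  have h1 : 0 ≤ ∑ y : Fin K, η y * Real.log (η y / asoftmax K u y.castSucc) := by
    have key : ∑ y : Fin K, η y * Real.log (asoftmax K u y.castSucc / η y) ≤ 0 := by
      calc ∑ y : Fin K, η y * Real.log (asoftmax K u y.castSucc / η y)
          ≤ ∑ y : Fin K, η y * (asoftmax K u y.castSucc / η y - 1) := by
            refine Finset.sum_le_sum fun y _ => ?_
            exact mul_le_mul_of_nonneg_left
              (Real.log_le_sub_one_of_pos (div_pos (hp y) (hpos y))) (hpos y).le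
        _ = ∑ y : Fin K, (asoftmax K u y.castSucc - η y) := by
            refine Finset.sum_congr rfl fun y _ => ?_
            rw [mul_sub, mul_one, mul_div_cancel₀ _ (hpos y).ne']
        _ = 0 := by rw [Finset.sum_sub_distrib, p_sum hK u, hsum]; ring
    have : ∑ y : Fin K, η y * Real.log (η y / asoftmax K u y.castSucc)
        = -∑ y : Fin K, η y * Real.log (asoftmax K u y.castSucc / η y) := by
      rw [← Finset.sum_neg_distrib]
      refine Finset.sum_congr rfl fun y _ => ?_
      rw [← inv_div, Real.log_inv]
      ring
    linarith [this ▸ neg_nonneg.mpr key]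
  have h2 : 0 ≤ c * Real.log (c / asoftmax K u (Fin.last K)) +
      (1 - c) * Real.log ((1 - c) / (1 - asoftmax K u (Fin.last K))) := by
    set q := asoftmax K u (Fin.last K)
    have ha : c * Real.log (q / c) ≤ c * (q / c - 1) :=
      mul_le_mul_of_nonneg_left (Real.log_le_sub_one_of_pos (div_pos hq0 hc0)) hc0.le
    have hb : (1 - c) * Real.log ((1 - q) / (1 - c)) ≤ (1 - c) * ((1 - q) / (1 - c) - 1) :=
      mul_le_mul_of_nonneg_left
        (Real.log_le_sub_one_of_pos (div_pos (by linarith) (by linarith)))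
        (by linarith)
    have hA : c * Real.log (c / q) = -(c * Real.log (q / c)) := by
      rw [← inv_div, Real.log_inv]; ring
    have hB : (1 - c) * Real.log ((1 - c) / (1 - q))
        = -((1 - c) * Real.log ((1 - q) / (1 - c))) := by
      rw [← inv_div, Real.log_inv]; ring
    have h1c : (1:ℝ) - c ≠ 0 := by linarith
    have he1 : c * (q / c - 1) = q - c := by
      rw [mul_sub, mul_one, mul_div_cancel₀ _ hc0.ne']
    have he2 : (1 - c) * ((1 - q) / (1 - c) - 1) = c - q := by
      rw [mul_sub, mul_one, mul_div_cancel₀ _ h1c]; ring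
    rw [hA, hB]
    nlinarith
  rw [Dval]; linarith

lemma condRisk_min (hK : 1 < K) (η : Fin K → ℝ) (hpos : ∀ y, 0 < η y)
    (hsum : ∑ y, η y = 1) (c : ℝ) (hc0 : 0 < c) (hc1 : c < 1) :
    ∃ v : Fin (K + 1) → ℝ, condRisk K η c v = Hval K η c := by
  have : Nonempty (Fin K) := fin_nonempty hK
  set m := ⨆ y, η y with hm
  have hm1 : m < 1 := by
    have := gap_pos hK η hpos
    rw [hsum] at this; exact this
  have hm0 : 0 < m := by
    obtain ⟨y⟩ := fin_nonempty hK
    calc (0:ℝ) < η y := hpos y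
    _ ≤ m := le_ciSup (Set.Finite.bddAbove (Set.finite_range η)) y
  have he0 : 0 < c * (1 - m) / (1 - c) := by
    apply div_pos (by nlinarith) (by linarith)
  refine ⟨Fin.lastCases (Real.log (c * (1 - m) / (1 - c))) (fun y => Real.log (η y)), ?_⟩
  set v : Fin (K + 1) → ℝ :=
    Fin.lastCases (Real.log (c * (1 - m) / (1 - c))) (fun y => Real.log (η y)) with hv
  have hvc : ∀ y : Fin K, v y.castSucc = Real.log (η y) := fun y => by
    rw [hv]; exact Fin.lastCases_castSucc y
  have hvl : v (Fin.last K) = Real.log (c * (1 - m) / (1 - c)) := by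
    rw [hv]; exact Fin.lastCases_last
  have hT : ∑ y' : Fin K, Real.exp (v y'.castSucc) = 1 := by
    simp only [hvc, Real.exp_log (hpos _)]; exact hsum
  have hM : (⨆ y' : Fin K, Real.exp (v y'.castSucc)) = m := by
    rw [hm]
    exact iSup_congr fun y => by rw [hvc, Real.exp_log (hpos y)]
  have hel : Real.exp (v (Fin.last K)) = c * (1 - m) / (1 - c) := by
    rw [hvl, Real.exp_log he0]
  have hq : asoftmax K v (Fin.last K) = c := by
    have h1c : (1:ℝ) - c ≠ 0 := by linarith
    have h1m : (1:ℝ) - m ≠ 0 := by linarith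
    rw [asoftmax_last, hT, hM, hel]
    have hden : 1 - m + c * (1 - m) / (1 - c) = (1 - m) / (1 - c) := by
      field_simp; ring
    rw [hden, div_div_div_cancel_right₀]
    · rw [mul_div_assoc, div_self h1m, mul_one]
    · exact h1c
  have hpv : ∀ y : Fin K, asoftmax K v y.castSucc = η y := fun y => by
    rw [asoftmax_castSucc, hT, hvc, Real.exp_log (hpos y), div_one]
  rw [condRisk, hq]
  simp only [hpv]
  rw [Hval]

lemma iInf_condRisk (hK : 1 < K) (η : Fin K → ℝ) (hpos : ∀ y, 0 < η y)
    (hsum : ∑ y, η y = 1) (c : ℝ) (hc0 : 0 < c) (hc1 : c < 1) :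
    (⨅ v : Fin (K + 1) → ℝ, condRisk K η c v) = Hval K η c := by
  have hlb : ∀ w, Hval K η c ≤ condRisk K η c w := fun w => by
    rw [condRisk_decomp hK η hpos c hc0 hc1 w]
    linarith [Dval_nonneg hK η hpos hsum c hc0 hc1 w]
  obtain ⟨v, hv⟩ := condRisk_min hK η hpos hsum c hc0 hc1
  refine le_antisymm ?_ (le_ciInf hlb)
  calc (⨅ v : Fin (K + 1) → ℝ, condRisk K η c v) ≤ condRisk K η c v :=
        ciInf_le ⟨Hval K η c, by rintro x ⟨w, rfl⟩; exact hlb w⟩ v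
    _ = Hval K η c := hv

end Aux

/-- the excess conditional risk of the asymmetric softmax loss
decomposes as a multiclass KL divergence plus a binary KL divergence. -/
theorem excess_condRisk_eq_KL (K : ℕ) (hK : 1 < K)
    (η : Fin K → ℝ) (hpos : ∀ y, 0 < η y) (hsum : ∑ y, η y = 1)
    (c : ℝ) (hc0 : 0 < c) (hc1 : c < 1) (u : Fin (K + 1) → ℝ) :
    condRisk K η c u - (⨅ v : Fin (K + 1) → ℝ, condRisk K η c v) =
      (∑ y : Fin K, η y * Real.log (η y / asoftmax K u y.castSucc)) +
        (c * Real.log (c / asoftmax K u (Fin.last K)) +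
          (1 - c) * Real.log ((1 - c) / (1 - asoftmax K u (Fin.last K)))) := by
  rw [iInf_condRisk hK η hpos hsum c hc0 hc1,
    condRisk_decomp hK η hpos c hc0 hc1 u, Dval]
  ring
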